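/- For the Bayesian V-design objective G(w) = (1/2n)·Tr(X ((1/σ²) Xᵀ D(w) X + λI)⁻¹ Xᵀ) defined for nonnegative weight vectors w ∈ ℝ₊ⁿ, the Hessian of G with respect to w is given by ∇²_w G(w) = (σ²/n)·(X F⁺(w) Xᵀ) ∘ (X F⁺(w) Xᵀ X F⁺(w) Xᵀ), where F⁺(w) = (Xᵀ D(w) X + λσ² I)⁻¹ and ∘ denotes the Hadamard product; consequently ∇²_w G(w) is positive semi-definite and G is convex on ℝ₊ⁿ. -/

import Mathlib

open Matrix

namespace BVDaux

variable {n d : ℕ}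

lemma trace_nonneg' {P : Matrix (Fin n) (Fin n) ℝ} (hP : P.PosSemidef) : 0 ≤ P.trace := by
  refine Finset.sum_nonneg fun i _ => ?_
  have := hP.dotProduct_mulVec_nonneg (Pi.single i 1)
  simpa [dotProduct, mulVec, Pi.single_apply] using this

lemma posSemidef_hadamard {A B : Matrix (Fin n) (Fin n) ℝ}
    (hA : A.PosSemidef) (hB : B.PosSemidef) : (A.hadamard B).PosSemidef := by
  obtain ⟨C, hC⟩ : ∃ C : Matrix (Fin n) (Fin n) ℝ, A = Cᴴ * C := by
    open scoped MatrixOrder in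
    exact ⟨CFC.sqrt A, by rw [(CFC.sqrt_nonneg A).posSemidef.1.eq, CFC.sqrt_mul_sqrt_self A hA.nonneg]⟩
  have hAe : ∀ i j, A i j = ∑ k, C k i * C k j := fun i j => by
    rw [hC]; simp [Matrix.mul_apply, conjTranspose_apply]
  refine Matrix.PosSemidef.of_dotProduct_mulVec_nonneg ?_ ?_
  · have h1 : ∀ i j, A j i = A i j := fun i j => by
      conv_lhs => rw [← hA.1]
      simp [conjTranspose_apply]
    have h2 : ∀ i j, B j i = B i j := fun i j => by
      conv_lhs => rw [← hB.1]
      simp [conjTranspose_apply]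
    ext i j
    simp [conjTranspose_apply, hadamard, h1 j i, h2 j i]
  · intro x
    set t : Fin n → Fin n → Fin n → ℝ :=
      fun k i j => (x i * C k i) * (B i j * (x j * C k j)) with ht
    have e1 : (star x) ⬝ᵥ (A.hadamard B).mulVec x = ∑ i, ∑ j, ∑ k, t k i j := by
      simp only [dotProduct, mulVec, hadamard_apply, star_trivial, Finset.sum_mul,
        Finset.mul_sum, ht]
      refine Finset.sum_congr rfl fun i _ => Finset.sum_congr rfl fun j _ => ?_
      rw [hAe i j]
      simp only [Finset.mul_sum, Finset.sum_mul]
      exact Finset.sum_congr rfl fun k _ => by ring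
    have e2 : ∑ i, ∑ j, ∑ k, t k i j = ∑ i, ∑ k, ∑ j, t k i j :=
      Finset.sum_congr rfl fun i _ => Finset.sum_comm
    have e3 : ∑ i, ∑ k, ∑ j, t k i j = ∑ k, ∑ i, ∑ j, t k i j := Finset.sum_comm
    have e4 : ∀ k, ∑ i, ∑ j, t k i j
        = (star fun i => x i * C k i) ⬝ᵥ B.mulVec (fun i => x i * C k i) := by
      intro k
      simp only [dotProduct, mulVec, star_trivial, Finset.mul_sum, ht]
    rw [e1, e2, e3]
    exact Finset.sum_nonneg fun k _ => by rw [e4 k]; exact hB.dotProduct_mulVec_nonneg _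

variable {n d : ℕ}

section core
attribute [local instance] Matrix.linftyOpNormedAddCommGroup Matrix.linftyOpNormedSpace
  Matrix.linftyOpNormedRing Matrix.linftyOpNormedAlgebra

variable (X : Matrix (Fin n) (Fin d) ℝ) (σ lam : ℝ)

noncomputable def Fm (w : Fin n → ℝ) : Matrix (Fin d) (Fin d) ℝ :=
  Xᵀ * Matrix.diagonal w * X + (lam * σ ^ 2) • 1

noncomputable def Mm (w : Fin n → ℝ) : Matrix (Fin n) (Fin n) ℝ :=
  X * Ring.inverse (Fm X σ lam w) * Xᵀ

noncomputable def Lm : (Fin n → ℝ) →L[ℝ] Matrix (Fin d) (Fin d) ℝ :=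
  LinearMap.toContinuousLinearMap
    { toFun := fun w => Xᵀ * Matrix.diagonal w * X
      map_add' := fun a b => by
        show Xᵀ * Matrix.diagonal (fun i => a i + b i) * X = _
        rw [← Matrix.diagonal_add, Matrix.mul_add, Matrix.add_mul]
      map_smul' := fun c a => by simp [Matrix.diagonal_smul, Matrix.mul_smul, Matrix.smul_mul] }

@[simp] lemma Lm_apply (v : Fin n → ℝ) : Lm X v = Xᵀ * Matrix.diagonal v * X := rfl

lemma Fm_transpose (w : Fin n → ℝ) : (Fm X σ lam w)ᵀ = Fm X σ lam w := by
  simp [Fm, Matrix.transpose_add, Matrix.transpose_mul, Matrix.transpose_smul,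
    Matrix.diagonal_transpose, Matrix.transpose_transpose, Matrix.mul_assoc]

lemma Mm_transpose (w : Fin n → ℝ) : (Mm X σ lam w)ᵀ = Mm X σ lam w := by
  simp only [Mm, ← Matrix.nonsing_inv_eq_ringInverse, Matrix.transpose_mul,
    Matrix.transpose_transpose, Matrix.transpose_nonsing_inv, Fm_transpose,
    Matrix.mul_assoc]

lemma Mm_symm_entry (w : Fin n → ℝ) (i j : Fin n) : Mm X σ lam w j i = Mm X σ lam w i j := by
  conv_lhs => rw [← Mm_transpose X σ lam w]
  rw [Matrix.transpose_apply]

lemma G_eq (hσ : σ ≠ 0) (u : Fin n → ℝ) (h : IsUnit (Fm X σ lam u)) :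
    (1 / (2 * (n : ℝ))) * Matrix.trace
        (X * ((σ ^ 2)⁻¹ • (Xᵀ * Matrix.diagonal u * X) +
            lam • (1 : Matrix (Fin d) (Fin d) ℝ))⁻¹ * Xᵀ)
      = (σ ^ 2 / (2 * (n : ℝ))) * Matrix.trace (Mm X σ lam u) := by
  have hs2 : (σ ^ 2 : ℝ) ≠ 0 := pow_ne_zero 2 hσ
  have h2 : (σ ^ 2)⁻¹ • (Xᵀ * Matrix.diagonal u * X) + lam • (1 : Matrix (Fin d) (Fin d) ℝ)
      = (σ ^ 2)⁻¹ • Fm X σ lam u := by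
    rw [Fm, smul_add, smul_smul]
    congr 2
    field_simp
  have h3 : ((σ ^ 2)⁻¹ • Fm X σ lam u)⁻¹ = (σ ^ 2) • (Fm X σ lam u)⁻¹ := by
    apply Matrix.inv_eq_right_inv
    rw [Matrix.smul_mul, Matrix.mul_smul, smul_smul,
      Matrix.mul_nonsing_inv _ ((Matrix.isUnit_iff_isUnit_det _).mp h),
      inv_mul_cancel₀ hs2, one_smul]
  rw [h2, h3, Matrix.nonsing_inv_eq_ringInverse]
  rw [Matrix.mul_smul, Matrix.smul_mul, Matrix.trace_smul]
  show (1 / (2 * (n:ℝ))) * (σ^2 • Matrix.trace (Mm X σ lam u)) = _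
  rw [smul_eq_mul]; ring

lemma trace_mul_diag_single (A B : Matrix (Fin n) (Fin n) ℝ) (i : Fin n) :
    Matrix.trace (A * Matrix.diagonal (Pi.single i 1) * B) = (B * A) i i := by
  rw [Matrix.trace_mul_comm, ← Matrix.mul_assoc]
  simp [Matrix.trace, Matrix.diag, Matrix.mul_diagonal, Pi.single_apply]

lemma entry_mul_diag_single (A B : Matrix (Fin n) (Fin n) ℝ) (i j : Fin n) :
    (A * Matrix.diagonal (Pi.single j (1:ℝ)) * B) i i = A i j * B j i := by
  rw [Matrix.mul_assoc]
  simp [Matrix.mul_apply, Matrix.diagonal_apply, Pi.single_apply, ite_mul, mul_ite,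
    Finset.sum_ite_eq, Finset.sum_ite_eq']

noncomputable def sand : Matrix (Fin d) (Fin d) ℝ →L[ℝ] Matrix (Fin n) (Fin n) ℝ :=
  LinearMap.toContinuousLinearMap
    { toFun := fun A => X * A * Xᵀ
      map_add' := fun a b => by
        show X * (a + b) * Xᵀ = _
        rw [Matrix.mul_add, Matrix.add_mul]
      map_smul' := fun c a => by simp [Matrix.mul_smul, Matrix.smul_mul] }

@[simp] lemma sand_apply (A : Matrix (Fin d) (Fin d) ℝ) : sand X A = X * A * Xᵀ := rfl

noncomputable def trCLM : Matrix (Fin n) (Fin n) ℝ →L[ℝ] ℝ :=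
  LinearMap.toContinuousLinearMap (Matrix.traceLinearMap (Fin n) ℝ ℝ)

@[simp] lemma trCLM_apply (A : Matrix (Fin n) (Fin n) ℝ) : trCLM A = A.trace := rfl

noncomputable def entCLM (i j : Fin n) : Matrix (Fin n) (Fin n) ℝ →L[ℝ] ℝ :=
  LinearMap.toContinuousLinearMap (Matrix.entryLinearMap ℝ ℝ i j)

@[simp] lemma entCLM_apply (i j : Fin n) (A : Matrix (Fin n) (Fin n) ℝ) :
    entCLM i j A = A i j := rfl

lemma hasFDerivAt_Fm (w : Fin n → ℝ) : HasFDerivAt (Fm X σ lam) (Lm X) w :=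
  ((Lm X).hasFDerivAt (x := w)).add_const ((lam * σ ^ 2) • (1 : Matrix (Fin d) (Fin d) ℝ))

lemma hasFDerivAt_inv (w : Fin n → ℝ) (h : IsUnit (Fm X σ lam w)) :
    HasFDerivAt (fun u => Ring.inverse (Fm X σ lam u))
      ((-(ContinuousLinearMap.mulLeftRight ℝ _ (Ring.inverse (Fm X σ lam w))
          (Ring.inverse (Fm X σ lam w)))).comp (Lm X)) w := by
  haveI : CompleteSpace (Matrix (Fin d) (Fin d) ℝ) := FiniteDimensional.complete ℝ _
  have hu := hasFDerivAt_ringInverse (𝕜 := ℝ) h.unit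
  rw [← Ring.inverse_unit h.unit, h.unit_spec] at hu
  exact hu.comp w (hasFDerivAt_Fm X σ lam w)

lemma hasFDerivAt_Mm (w : Fin n → ℝ) (h : IsUnit (Fm X σ lam w)) :
    HasFDerivAt (Mm X σ lam)
      ((sand X).comp ((-(ContinuousLinearMap.mulLeftRight ℝ _ (Ring.inverse (Fm X σ lam w))
          (Ring.inverse (Fm X σ lam w)))).comp (Lm X))) w :=
  ((sand X).hasFDerivAt).comp w (hasFDerivAt_inv X σ lam w h)

lemma dM_apply (P : Matrix (Fin d) (Fin d) ℝ) (v : Fin n → ℝ) :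
    ((sand X).comp ((-(ContinuousLinearMap.mulLeftRight ℝ _ P P)).comp (Lm X))) v
      = X * -(P * (Xᵀ * Matrix.diagonal v * X) * P) * Xᵀ := rfl

lemma sandwich_assoc (P : Matrix (Fin d) (Fin d) ℝ) (v : Fin n → ℝ) :
    X * (P * (Xᵀ * Matrix.diagonal v * X) * P) * Xᵀ
      = (X * P * Xᵀ) * Matrix.diagonal v * (X * P * Xᵀ) := by
  simp only [Matrix.mul_assoc]

lemma isOpen_unitSet : IsOpen {u : Fin n → ℝ | IsUnit (Fm X σ lam u)} := by
  have hc : Continuous fun u : Fin n → ℝ => (Fm X σ lam u).det := by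
    apply Continuous.matrix_det
    exact ((continuous_const.matrix_mul (continuous_id.matrix_diagonal)).matrix_mul
      continuous_const).add continuous_const
  have hset : {u : Fin n → ℝ | IsUnit (Fm X σ lam u)}
      = (fun u => (Fm X σ lam u).det) ⁻¹' ({0}ᶜ) := by
    ext u
    simp [Matrix.isUnit_iff_isUnit_det, isUnit_iff_ne_zero]
  rw [hset]
  exact isOpen_compl_singleton.preimage hc

lemma fderiv_G_eq (hσ : σ ≠ 0) (u : Fin n → ℝ) (h : IsUnit (Fm X σ lam u)) (i : Fin n) :
    fderiv ℝ (fun v : Fin n → ℝ => (1 / (2 * (n : ℝ))) * Matrix.trace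
        (X * ((σ ^ 2)⁻¹ • (Xᵀ * Matrix.diagonal v * X) +
            lam • (1 : Matrix (Fin d) (Fin d) ℝ))⁻¹ * Xᵀ)) u (Pi.single i 1)
      = -(σ ^ 2 / (2 * (n : ℝ))) * ((Mm X σ lam u * Mm X σ lam u) i i) := by
  have hM := hasFDerivAt_Mm X σ lam u h
  have htr : HasFDerivAt (fun v => Matrix.trace (Mm X σ lam v))
      ((trCLM).comp ((sand X).comp
        ((-(ContinuousLinearMap.mulLeftRight ℝ _ (Ring.inverse (Fm X σ lam u))
          (Ring.inverse (Fm X σ lam u)))).comp (Lm X)))) u :=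
    (trCLM.hasFDerivAt).comp u hM
  have hG' := htr.const_mul (σ ^ 2 / (2 * (n : ℝ)))
  have hGev : (fun v : Fin n → ℝ => (1 / (2 * (n : ℝ))) * Matrix.trace
        (X * ((σ ^ 2)⁻¹ • (Xᵀ * Matrix.diagonal v * X) +
            lam • (1 : Matrix (Fin d) (Fin d) ℝ))⁻¹ * Xᵀ))
      =ᶠ[nhds u] (fun v => (σ ^ 2 / (2 * (n : ℝ))) * Matrix.trace (Mm X σ lam v)) := by
    filter_upwards [(isOpen_unitSet X σ lam).mem_nhds h] with v hv
    exact G_eq X σ lam hσ v hv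
  have hG : HasFDerivAt (fun v : Fin n → ℝ => (1 / (2 * (n : ℝ))) * Matrix.trace
        (X * ((σ ^ 2)⁻¹ • (Xᵀ * Matrix.diagonal v * X) +
            lam • (1 : Matrix (Fin d) (Fin d) ℝ))⁻¹ * Xᵀ)) _ u :=
    hG'.congr_of_eventuallyEq hGev
  rw [hG.fderiv]
  simp only [ContinuousLinearMap.smulRight_apply, ContinuousLinearMap.comp_apply,
    ContinuousLinearMap.neg_apply, ContinuousLinearMap.mulLeftRight_apply, Lm_apply,
    sand_apply, trCLM_apply, ContinuousLinearMap.smul_apply, smul_eq_mul, dM_apply]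
  rw [Matrix.mul_neg, Matrix.neg_mul, Matrix.trace_neg, sandwich_assoc,
    trace_mul_diag_single]
  show σ ^ 2 / (2 * (n : ℝ)) * -((Mm X σ lam u * Mm X σ lam u) i i) = _
  ring


lemma Mm2_symm_entry (w : Fin n → ℝ) (i j : Fin n) :
    (Mm X σ lam w * Mm X σ lam w) j i = (Mm X σ lam w * Mm X σ lam w) i j := by
  have h : (Mm X σ lam w * Mm X σ lam w)ᵀ = Mm X σ lam w * Mm X σ lam w := by
    rw [Matrix.transpose_mul, Mm_transpose]
  conv_lhs => rw [← h]
  rw [Matrix.transpose_apply]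

lemma hessian_entry (hn : (n : ℝ) ≠ 0) (hσ : σ ≠ 0) (w : Fin n → ℝ)
    (h : IsUnit (Fm X σ lam w)) (i j : Fin n) :
    fderiv ℝ (fun u : Fin n → ℝ => fderiv ℝ (fun v : Fin n → ℝ =>
        (1 / (2 * (n : ℝ))) * Matrix.trace
        (X * ((σ ^ 2)⁻¹ • (Xᵀ * Matrix.diagonal v * X) +
            lam • (1 : Matrix (Fin d) (Fin d) ℝ))⁻¹ * Xᵀ)) u (Pi.single i 1)) w (Pi.single j 1)
      = (σ ^ 2 / (n : ℝ)) * (Mm X σ lam w i j * (Mm X σ lam w * Mm X σ lam w) i j) := by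
  have hev : (fun u : Fin n → ℝ => fderiv ℝ (fun v : Fin n → ℝ =>
        (1 / (2 * (n : ℝ))) * Matrix.trace
        (X * ((σ ^ 2)⁻¹ • (Xᵀ * Matrix.diagonal v * X) +
            lam • (1 : Matrix (Fin d) (Fin d) ℝ))⁻¹ * Xᵀ)) u (Pi.single i 1))
      =ᶠ[nhds w] (fun u => -(σ ^ 2 / (2 * (n : ℝ))) * ((Mm X σ lam u * Mm X σ lam u) i i)) := by
    filter_upwards [(isOpen_unitSet X σ lam).mem_nhds h] with u hu
    exact fderiv_G_eq X σ lam hσ u hu i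
  rw [hev.fderiv_eq]
  have hM := hasFDerivAt_Mm X σ lam w h
  have hq := hM.mul' hM
  have hent : HasFDerivAt (fun u : Fin n → ℝ => (Mm X σ lam u * Mm X σ lam u) i i)
      ((entCLM i i).comp ((Mm X σ lam w) •
        ((sand X).comp ((-(ContinuousLinearMap.mulLeftRight ℝ _ (Ring.inverse (Fm X σ lam w))
          (Ring.inverse (Fm X σ lam w)))).comp (Lm X))) +
        ((sand X).comp ((-(ContinuousLinearMap.mulLeftRight ℝ _ (Ring.inverse (Fm X σ lam w))
          (Ring.inverse (Fm X σ lam w)))).comp (Lm X))).smulRight (Mm X σ lam w))) w :=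
    ((entCLM i i).hasFDerivAt).comp w hq
  have hφ := hent.const_mul (-(σ ^ 2 / (2 * (n : ℝ))))
  rw [hφ.fderiv]
  have hMdef : X * Ring.inverse (Fm X σ lam w) * Xᵀ = Mm X σ lam w := rfl
  simp only [ContinuousLinearMap.smul_apply, ContinuousLinearMap.comp_apply,
    ContinuousLinearMap.add_apply, ContinuousLinearMap.smulRight_apply,
    ContinuousLinearMap.neg_apply, ContinuousLinearMap.mulLeftRight_apply,
    Lm_apply, sand_apply, entCLM_apply, smul_eq_mul, Matrix.mul_neg, Matrix.neg_mul,
    sandwich_assoc, hMdef, Matrix.add_apply, Matrix.neg_apply, dM_apply]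
  have hS1 : (Mm X σ lam w * (Mm X σ lam w * Matrix.diagonal (Pi.single j (1:ℝ)) *
      Mm X σ lam w)) i i
      = (Mm X σ lam w * Mm X σ lam w) i j * Mm X σ lam w j i := by
    rw [show Mm X σ lam w * (Mm X σ lam w * Matrix.diagonal (Pi.single j (1:ℝ)) * Mm X σ lam w)
        = (Mm X σ lam w * Mm X σ lam w) * Matrix.diagonal (Pi.single j (1:ℝ)) * Mm X σ lam w by
      simp only [Matrix.mul_assoc]]
    exact entry_mul_diag_single _ _ i j
  have hS2 : ((Mm X σ lam w * Matrix.diagonal (Pi.single j (1:ℝ)) * Mm X σ lam w) *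
      Mm X σ lam w) i i
      = Mm X σ lam w i j * (Mm X σ lam w * Mm X σ lam w) j i := by
    rw [show (Mm X σ lam w * Matrix.diagonal (Pi.single j (1:ℝ)) * Mm X σ lam w) * Mm X σ lam w
        = Mm X σ lam w * Matrix.diagonal (Pi.single j (1:ℝ)) * (Mm X σ lam w * Mm X σ lam w) by
      simp only [Matrix.mul_assoc]]
    exact entry_mul_diag_single _ _ i j
  rw [hS1, hS2, Mm_symm_entry, Mm2_symm_entry]
  field_simp
  ring

end core

lemma conjT {a b : ℕ} (A : Matrix (Fin a) (Fin b) ℝ) : Aᴴ = Aᵀ := by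
  ext i j; simp [Matrix.conjTranspose_apply]

lemma psd_smul {ι : Type*} [Fintype ι] {A : Matrix ι ι ℝ} (hA : A.PosSemidef) {c : ℝ}
    (hc : 0 ≤ c) : (c • A).PosSemidef := by
  refine Matrix.PosSemidef.of_dotProduct_mulVec_nonneg ?_ ?_
  · show (c • A)ᴴ = c • A
    rw [Matrix.conjTranspose_smul, hA.1]
    simp
  · intro x
    rw [Matrix.smul_mulVec, dotProduct_smul, smul_eq_mul]
    exact mul_nonneg hc (hA.dotProduct_mulVec_nonneg x)

section psd
variable (X : Matrix (Fin n) (Fin d) ℝ) {σ lam : ℝ}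

lemma posDef_Fm (hσ : 0 < σ) (hlam : 0 < lam) {w : Fin n → ℝ} (hw : 0 ≤ w) :
    (Fm X σ lam w).PosDef := by
  have h1 : (Xᵀ * Matrix.diagonal w * X).PosSemidef := by
    have hd : (Matrix.diagonal w).PosSemidef := Matrix.PosSemidef.diagonal hw
    have h := hd.conjTranspose_mul_mul_same X
    rwa [conjT] at h
  have h2 : ((lam * σ ^ 2) • (1 : Matrix (Fin d) (Fin d) ℝ)).PosDef := by
    rw [Matrix.smul_one_eq_diagonal]
    exact Matrix.posDef_diagonal_iff.mpr fun i => by positivity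
  exact Matrix.PosDef.posSemidef_add h1 h2

lemma posSemidef_Mm (hσ : 0 < σ) (hlam : 0 < lam) {w : Fin n → ℝ} (hw : 0 ≤ w) :
    (Mm X σ lam w).PosSemidef := by
  have hF := posDef_Fm X hσ hlam hw
  have h := hF.inv.posSemidef.mul_mul_conjTranspose_same X
  rwa [conjT, Matrix.nonsing_inv_eq_ringInverse] at h

lemma posSemidef_Mm2 (hσ : 0 < σ) (hlam : 0 < lam) {w : Fin n → ℝ} (hw : 0 ≤ w) :
    (Mm X σ lam w * Mm X σ lam w).PosSemidef := by
  have h := Matrix.posSemidef_conjTranspose_mul_self (Mm X σ lam w)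
  rwa [conjT, Mm_transpose] at h

lemma posDef_comb {m : ℕ} {A B : Matrix (Fin m) (Fin m) ℝ} (hA : A.PosDef) (hB : B.PosDef)
    {a b : ℝ} (ha : 0 ≤ a) (hb : 0 ≤ b) (hab : a + b = 1) : (a • A + b • B).PosDef := by
  refine Matrix.PosDef.of_dotProduct_mulVec_pos ?_ ?_
  · show (a • A + b • B)ᴴ = _
    rw [Matrix.conjTranspose_add, Matrix.conjTranspose_smul, Matrix.conjTranspose_smul,
      hA.1, hB.1]
    simp
  · intro x hx
    rw [Matrix.add_mulVec, dotProduct_add, Matrix.smul_mulVec,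
      Matrix.smul_mulVec, dotProduct_smul, dotProduct_smul, smul_eq_mul, smul_eq_mul]
    have qA := hA.dotProduct_mulVec_pos hx
    have qB := hB.dotProduct_mulVec_pos hx
    rcases eq_or_lt_of_le ha with hea | hpa
    · have hb1 : b = 1 := by linarith
      rw [← hea, hb1]; simpa using qB
    · exact add_pos_of_pos_of_nonneg (mul_pos hpa qA) (mul_nonneg hb qB.le)

lemma inv_convex {m : ℕ} {A B : Matrix (Fin m) (Fin m) ℝ} (hA : A.PosDef) (hB : B.PosDef)
    {a b : ℝ} (ha : 0 ≤ a) (hb : 0 ≤ b) (hab : a + b = 1) :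
    (a • A⁻¹ + b • B⁻¹ - (a • A + b • B)⁻¹).PosSemidef := by
  have hK : ∀ {C : Matrix (Fin m) (Fin m) ℝ}, C.PosDef →
      (Matrix.fromBlocks C (1 : Matrix (Fin m) (Fin m) ℝ) 1 C⁻¹).PosSemidef := by
    intro C hC
    have h0 : (C⁻¹ - (1 : Matrix (Fin m) (Fin m) ℝ)ᴴ * C⁻¹ * 1).PosSemidef := by
      simpa using (Matrix.PosSemidef.zero (n := Fin m) (R := ℝ))
    haveI := hC.isUnit.invertible
    have := (Matrix.PosDef.fromBlocks₁₁ (1 : Matrix (Fin m) (Fin m) ℝ) C⁻¹ hC).mpr h0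
    simpa using this
  have hsum := (psd_smul (hK hA) ha).add (psd_smul (hK hB) hb)
  have hfb : a • Matrix.fromBlocks A (1 : Matrix (Fin m) (Fin m) ℝ) 1 A⁻¹ +
      b • Matrix.fromBlocks B (1 : Matrix (Fin m) (Fin m) ℝ) 1 B⁻¹
      = Matrix.fromBlocks (a • A + b • B) (1 : Matrix (Fin m) (Fin m) ℝ) 1
          (a • A⁻¹ + b • B⁻¹) := by
    rw [Matrix.fromBlocks_smul, Matrix.fromBlocks_smul, Matrix.fromBlocks_add]
    congr 1 <;> try rfl
    all_goals rw [← add_smul, hab, one_smul]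
  rw [hfb] at hsum
  haveI := (posDef_comb hA hB ha hb hab).isUnit.invertible
  have hres := (Matrix.PosDef.fromBlocks₁₁ (1 : Matrix (Fin m) (Fin m) ℝ)
      (a • A⁻¹ + b • B⁻¹) (posDef_comb hA hB ha hb hab)).mp (by simpa using hsum)
  simpa using hres

lemma trace_sand_nonneg {P : Matrix (Fin d) (Fin d) ℝ} (hP : P.PosSemidef) :
    0 ≤ Matrix.trace (X * P * Xᵀ) := by
  have h := hP.mul_mul_conjTranspose_same X
  rw [conjT] at h
  exact trace_nonneg' h

end psd

end BVDaux

open BVDaux in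
/-- For the Bayesian V-design objective
`G(w) = (1/2n)·Tr(X ((1/σ²) Xᵀ D(w) X + λI)⁻¹ Xᵀ)` on nonnegative weight vectors, the
Hessian is `∇²_w G(w) = (σ²/n)·(X F⁺(w) Xᵀ) ∘ (X F⁺(w) Xᵀ X F⁺(w) Xᵀ)` with
`F⁺(w) = (Xᵀ D(w) X + λσ² I)⁻¹` and `∘` the Hadamard product; consequently the Hessian
is positive semi-definite and `G` is convex on `ℝ₊ⁿ`. -/
theorem bayesian_V_design_hessian_convex {n d : ℕ} (hn : 0 < n)
    (X : Matrix (Fin n) (Fin d) ℝ) (σ lam : ℝ) (hσ : 0 < σ) (hlam : 0 < lam) :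
    letI Fp : (Fin n → ℝ) → Matrix (Fin d) (Fin d) ℝ := fun w =>
      (Xᵀ * Matrix.diagonal w * X + (lam * σ ^ 2) • (1 : Matrix (Fin d) (Fin d) ℝ))⁻¹
    letI G : (Fin n → ℝ) → ℝ := fun w =>
      (1 / (2 * n)) * Matrix.trace
        (X * ((σ ^ 2)⁻¹ • (Xᵀ * Matrix.diagonal w * X) +
            lam • (1 : Matrix (Fin d) (Fin d) ℝ))⁻¹ * Xᵀ)
    letI Hm : (Fin n → ℝ) → Matrix (Fin n) (Fin n) ℝ := fun w =>
      (σ ^ 2 / n) • Matrix.hadamard (X * Fp w * Xᵀ) (X * Fp w * Xᵀ * X * Fp w * Xᵀ)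
    (∀ w : Fin n → ℝ, 0 ≤ w →
        (∀ i j, fderiv ℝ (fun u => fderiv ℝ G u (Pi.single i 1)) w (Pi.single j 1) =
          Hm w i j) ∧ (Hm w).PosSemidef) ∧
      ConvexOn ℝ {u : Fin n → ℝ | 0 ≤ u} G := by
  have hn' : (n : ℝ) ≠ 0 := Nat.cast_ne_zero.mpr hn.ne'
  have hFp : ∀ w : Fin n → ℝ,
      (Xᵀ * Matrix.diagonal w * X + (lam * σ ^ 2) • (1 : Matrix (Fin d) (Fin d) ℝ))⁻¹
        = Ring.inverse (Fm X σ lam w) := fun w => by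
    rw [Fm, Matrix.nonsing_inv_eq_ringInverse]
  have hHm : ∀ w : Fin n → ℝ,
      (σ ^ 2 / (n:ℝ)) • Matrix.hadamard
        (X * (Xᵀ * Matrix.diagonal w * X + (lam * σ ^ 2) • (1 : Matrix (Fin d) (Fin d) ℝ))⁻¹ * Xᵀ)
        (X * (Xᵀ * Matrix.diagonal w * X + (lam * σ ^ 2) • (1 : Matrix (Fin d) (Fin d) ℝ))⁻¹ * Xᵀ *
          X * (Xᵀ * Matrix.diagonal w * X + (lam * σ ^ 2) • (1 : Matrix (Fin d) (Fin d) ℝ))⁻¹ * Xᵀ)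
        = (σ ^ 2 / (n:ℝ)) • Matrix.hadamard (Mm X σ lam w) (Mm X σ lam w * Mm X σ lam w) := by
    intro w
    rw [hFp w]
    have h2 : X * Ring.inverse (Fm X σ lam w) * Xᵀ * X * Ring.inverse (Fm X σ lam w) * Xᵀ
        = Mm X σ lam w * Mm X σ lam w := by
      rw [Mm]; simp only [Matrix.mul_assoc]
    rw [h2, show X * Ring.inverse (Fm X σ lam w) * Xᵀ = Mm X σ lam w from rfl]
  refine ⟨fun w hw => ?_, ?_⟩
  · have hu : IsUnit (Fm X σ lam w) := (posDef_Fm X hσ hlam hw).isUnit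
    constructor
    · intro i j
      have hkey := hessian_entry X σ lam hn' hσ.ne' w hu i j
      dsimp only
      rw [hkey, hHm w]
      rw [Matrix.smul_apply, Matrix.hadamard_apply, smul_eq_mul]
    · dsimp only
      rw [hHm w]
      exact psd_smul
        (posSemidef_hadamard (posSemidef_Mm X hσ hlam hw) (posSemidef_Mm2 X hσ hlam hw))
        (by positivity)
  · constructor
    · intro x hx y hy a b ha hb hab
      intro i
      simp only [Pi.add_apply, Pi.smul_apply, smul_eq_mul]
      exact add_nonneg (mul_nonneg ha (hx i)) (mul_nonneg hb (hy i))
    · intro x hx y hy a b ha hb hab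
      have hA := posDef_Fm X hσ hlam hx
      have hB := posDef_Fm X hσ hlam hy
      have hxy : (0 : Fin n → ℝ) ≤ a • x + b • y := by
        intro i
        simp only [Pi.add_apply, Pi.smul_apply, smul_eq_mul]
        exact add_nonneg (mul_nonneg ha (hx i)) (mul_nonneg hb (hy i))
      have hC := posDef_Fm X hσ hlam hxy
      have hFcomb : Fm X σ lam (a • x + b • y) = a • Fm X σ lam x + b • Fm X σ lam y := by
        rw [Fm, Fm, Fm]
        have hdiag : Matrix.diagonal (a • x + b • y)
            = a • Matrix.diagonal x + b • Matrix.diagonal y := by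
          ext i j
          by_cases h : i = j <;>
            simp [Matrix.diagonal_apply, h]
        have h1 : (lam * σ ^ 2) • (1 : Matrix (Fin d) (Fin d) ℝ)
            = a • ((lam * σ ^ 2) • (1 : Matrix (Fin d) (Fin d) ℝ))
              + b • ((lam * σ ^ 2) • (1 : Matrix (Fin d) (Fin d) ℝ)) := by
          rw [← add_smul, hab, one_smul]
        rw [hdiag, Matrix.mul_add, Matrix.add_mul, Matrix.mul_smul, Matrix.mul_smul,
          Matrix.smul_mul, Matrix.smul_mul]
        conv_lhs => rw [h1]
        rw [smul_add, smul_add]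
        abel
      have hconv := inv_convex hA hB ha hb hab
      have htr := trace_sand_nonneg X hconv
      simp only [Matrix.mul_sub, Matrix.sub_mul, Matrix.mul_add, Matrix.add_mul,
        Matrix.mul_smul, Matrix.smul_mul, Matrix.trace_sub, Matrix.trace_add,
        Matrix.trace_smul, smul_eq_mul] at htr
      have hGx := G_eq X σ lam hσ.ne' x hA.isUnit
      have hGy := G_eq X σ lam hσ.ne' y hB.isUnit
      have hGc := G_eq X σ lam hσ.ne' (a • x + b • y) hC.isUnit
      dsimp only
      rw [smul_eq_mul, smul_eq_mul, hGx, hGy, hGc]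
      have hMc : Matrix.trace (Mm X σ lam (a • x + b • y))
          = Matrix.trace (X * (a • Fm X σ lam x + b • Fm X σ lam y)⁻¹ * Xᵀ) := by
        rw [Mm, hFcomb, Matrix.nonsing_inv_eq_ringInverse]
      have hMx : Matrix.trace (Mm X σ lam x)
          = Matrix.trace (X * (Fm X σ lam x)⁻¹ * Xᵀ) := by
        rw [Mm, Matrix.nonsing_inv_eq_ringInverse]
      have hMy : Matrix.trace (Mm X σ lam y)
          = Matrix.trace (X * (Fm X σ lam y)⁻¹ * Xᵀ) := by
        rw [Mm, Matrix.nonsing_inv_eq_ringInverse]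
      rw [hMc, hMx, hMy]
      have hcoef : 0 ≤ σ ^ 2 / (2 * (n:ℝ)) := by positivity
      nlinarith [htr, hcoef]
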